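/- Let I be a repeated matching instance with n agents/items where n ≤ 5, any number of rounds T, and arbitrary real-valued valuations (mixed items). Then there exists a repeated matching of I that is swapEF. -/

import Mathlib

open Finset
open Fin.NatCast

/-- The number of rounds in which agent `i` is matched to item `g`
under the repeated matching `A` (a sequence of `T` bijections from agents to items). -/
def mult {α β : Type*} [DecidableEq β] {T : ℕ} (A : Fin T → α ≃ β) (i : α) (g : β) : ℕ :=
  (Finset.univ.filter fun t : Fin T => A t i = g).card

/-- The value of a bundle with multiplicities `B` under the valuation `v`,
where `v g t` is the value of the `t`-th copy of item `g`. -/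
def bundleValue {β : Type*} [Fintype β] (v : β → ℕ → ℝ) (B : β → ℕ) : ℝ :=
  ∑ g : β, ∑ t ∈ Finset.range (B g), v g (t + 1)

/-- The social welfare of a repeated matching. -/
def SW {α β : Type*} [Fintype α] [Fintype β] [DecidableEq β] {T : ℕ}
    (v : α → β → ℕ → ℝ) (A : Fin T → α ≃ β) : ℝ :=
  ∑ i : α, bundleValue (v i) (mult A i)

/-- Remove one copy of `g` from the bundle `B` (if present; otherwise leave `B` intact). -/
def removeOne {β : Type*} [DecidableEq β] (B : β → ℕ) (g : β) : β → ℕ :=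
  fun g' => if g' = g then B g' - 1 else B g'

/-- `EF1`: every agent `i` values her bundle at least as much as any other agent `j`'s
bundle after removing one copy of some item. -/
def EF1 {α β : Type*} [Fintype β] [DecidableEq β] {T : ℕ}
    (v : α → β → ℕ → ℝ) (A : Fin T → α ≃ β) : Prop :=
  ∀ i j : α, ∃ g : β,
    bundleValue (v i) (mult A i) ≥ bundleValue (v i) (removeOne (mult A j) g)

/-- Replace one copy of `gout` by one copy of `gin` in the bundle `B`. -/
def swapBundle {β : Type*} [DecidableEq β] (B : β → ℕ) (gout gin : β) : β → ℕ :=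
  fun g => (B g + if g = gin then 1 else 0) - (if g = gout then 1 else 0)

/-- `swapEF`: for every pair of agents `i, j`, either `i` does not envy `j`, or the
envy disappears after swapping a copy of some item of `i` with a copy of some item
of `j`. -/
def swapEF {α β : Type*} [Fintype β] [DecidableEq β] {T : ℕ}
    (v : α → β → ℕ → ℝ) (A : Fin T → α ≃ β) : Prop :=
  ∀ i j : α,
    bundleValue (v i) (mult A i) ≥ bundleValue (v i) (mult A j) ∨
    ∃ gi gj : β, 1 ≤ mult A i gi ∧ 1 ≤ mult A j gj ∧
      bundleValue (v i) (swapBundle (mult A i) gi gj) ≥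
        bundleValue (v i) (swapBundle (mult A j) gj gi)

section Aux

/-- Counting multiples: number of `t < T` with `t % n = d`. -/
lemma count_mod (n d T : ℕ) (hn : 0 < n) (hd : d < n) :
    ((Finset.range T).filter fun t => t % n = d).card
      = T / n + if d < T % n then 1 else 0 := by
  induction T with
  | zero => simp
  | succ T ih =>
    have hqr : n * (T / n) + T % n = T := Nat.div_add_mod T n
    have hrlt : T % n < n := Nat.mod_lt _ hn
    rw [Finset.range_add_one, Finset.filter_insert]
    by_cases hc : T % n + 1 < n
    · have h2 : (T + 1) / n = T / n ∧ (T + 1) % n = T % n + 1 := by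
        rw [Nat.div_mod_unique hn]
        exact ⟨by linarith, hc⟩
      by_cases hT : T % n = d
      · rw [if_pos hT, Finset.card_insert_of_notMem (by simp), ih, h2.1, h2.2]
        split_ifs <;> omega
      · rw [if_neg hT, ih, h2.1, h2.2]
        split_ifs <;> omega
    · have hc' : T % n + 1 = n := by omega
      have hmul : n * (T / n + 1) = n * (T / n) + n := by ring
      have h2 : (T + 1) / n = T / n + 1 ∧ (T + 1) % n = 0 := by
        rw [Nat.div_mod_unique hn]
        exact ⟨by linarith, hn⟩
      by_cases hT : T % n = d
      · rw [if_pos hT, Finset.card_insert_of_notMem (by simp), ih, h2.1, h2.2]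
        split_ifs <;> omega
      · rw [if_neg hT, ih, h2.1, h2.2]
        split_ifs <;> omega

/-- Cyclic distance from `i` to `g`. -/
def dIdx (n : ℕ) (g i : Fin n) : ℕ := (g.val + (n - i.val)) % n

lemma nat_iff (n a gv x : ℕ) (hn : 0 < n) (ha : a < n) (hg : gv < n) (hx : x < n) :
    (a + x) % n = gv ↔ x = (gv + (n - a)) % n := by
  have e1 : (a + x) % n = if a + x < n then a + x else a + x - n := by
    split_ifs with h
    · exact Nat.mod_eq_of_lt h
    · rw [Nat.mod_eq_sub_mod (le_of_not_gt h)]; exact Nat.mod_eq_of_lt (by omega)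
  have e2 : (gv + (n - a)) % n = if gv + (n - a) < n then gv + (n - a) else gv + (n - a) - n := by
    split_ifs with h
    · exact Nat.mod_eq_of_lt h
    · rw [Nat.mod_eq_sub_mod (le_of_not_gt h)]; exact Nat.mod_eq_of_lt (by omega)
  rw [e1, e2]; split_ifs <;> omega

/-- Multiplicities under the cyclic repeated matching. -/
lemma mult_cyclic (n T : ℕ) [NeZero n] (i g : Fin n) :
    mult (fun t : Fin T => Equiv.addRight ((t : ℕ) : Fin n)) i g
      = T / n + if dIdx n g i < T % n then 1 else 0 := by
  have hn : 0 < n := Nat.pos_of_ne_zero (NeZero.ne n)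
  have hiff : ∀ t : Fin T,
      ((Equiv.addRight ((t : ℕ) : Fin n)) i = g) ↔ ((t : ℕ) % n = dIdx n g i) := by
    intro t
    have h0 : (Equiv.addRight ((t : ℕ) : Fin n)) i = i + ((t : ℕ) : Fin n) := rfl
    have hval : (i + ((t : ℕ) : Fin n)).val = (i.val + (t : ℕ) % n) % n := by
      simp [Fin.val_add, Fin.val_natCast]
    rw [h0, Fin.ext_iff, hval]
    exact nat_iff n i.val g.val ((t : ℕ) % n) hn i.isLt g.isLt (Nat.mod_lt _ hn)
  have hcard : mult (fun t : Fin T => Equiv.addRight ((t : ℕ) : Fin n)) i g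
      = ((Finset.range T).filter fun t => t % n = dIdx n g i).card := by
    unfold mult
    rw [Finset.card_filter, Finset.card_filter,
      ← Fin.sum_univ_eq_sum_range (fun k => if k % n = dIdx n g i then 1 else 0) T]
    exact Finset.sum_congr rfl fun t _ => if_congr (hiff t) rfl rfl
  rw [hcard, count_mod n (dIdx n g i) T hn (Nat.mod_lt _ hn)]

/-- The set of items agent `i` gets one extra copy of. -/
def Eset (n r : ℕ) (i : Fin n) : Finset (Fin n) :=
  Finset.univ.filter fun g => dIdx n g i < r

lemma mem_Eset (n r : ℕ) (i g : Fin n) :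
    g ∈ Eset n r i ↔ dIdx n g i < r := by
  simp [Eset]

/-- The key combinatorial fact for `n ≤ 5`: the extra sets of two agents
differ in at most two items, and in equally many in both directions. -/
lemma arcs (n r : ℕ) (hn : n ≤ 5) (hr : r < n) (i j : Fin n) :
    ((Eset n r i) \ (Eset n r j)).card = ((Eset n r j) \ (Eset n r i)).card ∧
    ((Eset n r i) \ (Eset n r j)).card ≤ 2 := by
  rcases n with _ | _ | _ | _ | _ | _ | n
  · exact i.elim0
  · revert i j; interval_cases r <;> decide
  · revert i j; interval_cases r <;> decide
  · revert i j; interval_cases r <;> decide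
  · revert i j; interval_cases r <;> decide
  · revert i j; interval_cases r <;> decide
  · omega

/-- Decomposition of the bundle value of "q copies of everything plus one
extra copy of each item in E". -/
lemma bundle_decomp {β : Type*} [Fintype β] [DecidableEq β] (v : β → ℕ → ℝ) (q : ℕ)
    (E : Finset β) :
    bundleValue v (fun g => q + if g ∈ E then 1 else 0)
      = (∑ g : β, ∑ t ∈ Finset.range q, v g (t + 1)) + ∑ g ∈ E, v g (q + 1) := by
  unfold bundleValue
  have h1 : ∑ g ∈ E, v g (q + 1) = ∑ g : β, if g ∈ E then v g (q + 1) else 0 := by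
    rw [Finset.sum_ite_mem, Finset.univ_inter]
  rw [h1, ← Finset.sum_add_distrib]
  refine Finset.sum_congr rfl fun g _ => ?_
  by_cases h : g ∈ E <;> simp [h, Finset.sum_range_succ]

lemma swap_eq {β : Type*} [DecidableEq β] (q : ℕ) (E : Finset β) (a d : β)
    (ha : a ∈ E) (hd : d ∉ E) :
    swapBundle (fun g => q + if g ∈ E then 1 else 0) a d
      = fun g => q + if g ∈ insert d (E.erase a) then 1 else 0 := by
  have had : a ≠ d := fun h => hd (h ▸ ha)
  funext g
  unfold swapBundle
  by_cases h1 : g = a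
  · subst h1
    simp [had, ha]
  · by_cases h2 : g = d
    · subst h2
      simp [hd, Ne.symm had, h1]
    · simp [h1, h2]

end Aux

/-- The cyclic repeated matching is swapEF when `n ≤ 5`. -/
lemma main_pos (n T : ℕ) [NeZero n] (hn : n ≤ 5) (v : Fin n → Fin n → ℕ → ℝ) :
    swapEF v (fun t : Fin T => Equiv.addRight ((t : ℕ) : Fin n)) := by
  intro i j
  have hn0 : 0 < n := Nat.pos_of_ne_zero (NeZero.ne n)
  have hrn : T % n < n := Nat.mod_lt _ hn0
  set A : Fin T → Fin n ≃ Fin n := fun t : Fin T => Equiv.addRight ((t : ℕ) : Fin n) with hA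
  have hmult : ∀ k : Fin n,
      mult A k = fun g => T / n + if g ∈ Eset n (T % n) k then 1 else 0 := by
    intro k
    funext g
    rw [hA, mult_cyclic]
    congr 1
    by_cases h : dIdx n g k < T % n <;> simp [mem_Eset, h]
  have hbv : ∀ k : Fin n,
      bundleValue (v i) (mult A k)
        = (∑ g : Fin n, ∑ t ∈ Finset.range (T / n), v i g (t + 1))
          + ∑ g ∈ Eset n (T % n) k, v i g (T / n + 1) := by
    intro k
    rw [hmult k, bundle_decomp]
  rcases le_or_gt (bundleValue (v i) (mult A j)) (bundleValue (v i) (mult A i)) with hle | hlt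
  · exact Or.inl hle
  right
  -- notation
  set u : Fin n → ℝ := fun g => v i g (T / n + 1) with hu
  have hij : ∑ g ∈ Eset n (T % n) i, u g < ∑ g ∈ Eset n (T % n) j, u g := by
    rw [hbv i, hbv j] at hlt
    linarith
  have harc := arcs n (T % n) hn hrn i j
  have h1 := Finset.sum_inter_add_sum_sdiff (Eset n (T % n) i) (Eset n (T % n) j) u
  have h2 := Finset.sum_inter_add_sum_sdiff (Eset n (T % n) j) (Eset n (T % n) i) u
  rw [Finset.inter_comm] at h2
  have hsum : ∑ g ∈ Eset n (T % n) i \ Eset n (T % n) j, u g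
      < ∑ g ∈ Eset n (T % n) j \ Eset n (T % n) i, u g := by linarith
  have hTne : (Eset n (T % n) j \ Eset n (T % n) i).card ≠ 0 := by
    intro h0
    have hS0 : (Eset n (T % n) i \ Eset n (T % n) j).card = 0 := harc.1.trans h0
    rw [Finset.card_eq_zero] at h0 hS0
    rw [h0, hS0] at hsum
    simp at hsum
  obtain ⟨d, a, hdT, haS, hkey⟩ :
      ∃ d a, d ∈ Eset n (T % n) j \ Eset n (T % n) i ∧
        a ∈ Eset n (T % n) i \ Eset n (T % n) j ∧
        (∑ g ∈ Eset n (T % n) j \ Eset n (T % n) i, u g)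
          - (∑ g ∈ Eset n (T % n) i \ Eset n (T % n) j, u g) ≤ 2 * (u d - u a) := by
    have h12 : (Eset n (T % n) j \ Eset n (T % n) i).card = 1 ∨
        (Eset n (T % n) j \ Eset n (T % n) i).card = 2 := by
      have := harc.1
      have := harc.2
      omega
    rcases h12 with hone | htwo
    · obtain ⟨d, hd⟩ := Finset.card_eq_one.mp hone
      obtain ⟨a, ha⟩ := Finset.card_eq_one.mp (harc.1.trans hone)
      refine ⟨d, a, by simp [hd], by simp [ha], ?_⟩
      rw [hd, ha, Finset.sum_singleton, Finset.sum_singleton]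
      rw [hd, ha, Finset.sum_singleton, Finset.sum_singleton] at hsum
      linarith
    · obtain ⟨d1, d2, hd12, hd⟩ := Finset.card_eq_two.mp htwo
      obtain ⟨a1, a2, ha12, ha⟩ := Finset.card_eq_two.mp (harc.1.trans htwo)
      rw [hd, ha, Finset.sum_pair hd12, Finset.sum_pair ha12]
      rcases le_total (u d1 - u a1) (u d2 - u a2) with hcmp | hcmp
      · exact ⟨d2, a2, by simp [hd], by simp [ha], by linarith⟩
      · exact ⟨d1, a1, by simp [hd], by simp [ha], by linarith⟩
  rw [Finset.mem_sdiff] at hdT haS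
  obtain ⟨hdj, hdi⟩ := hdT
  obtain ⟨hai, haj⟩ := haS
  refine ⟨a, d, ?_, ?_, ?_⟩
  · rw [hmult i]
    simp [hai]
  · rw [hmult j]
    simp [hdj]
  · rw [hmult i, hmult j, swap_eq _ _ _ _ hai hdi, swap_eq _ _ _ _ hdj haj,
      bundle_decomp, bundle_decomp,
      Finset.sum_insert (fun h => hdi (Finset.mem_of_mem_erase h)),
      Finset.sum_insert (fun h => haj (Finset.mem_of_mem_erase h)),
      Finset.sum_erase_eq_sub hai, Finset.sum_erase_eq_sub hdj]
    have e1 : ∑ g ∈ Eset n (T % n) i, v i g (T / n + 1) = ∑ g ∈ Eset n (T % n) i, u g := rfl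
    have e2 : ∑ g ∈ Eset n (T % n) j, v i g (T / n + 1) = ∑ g ∈ Eset n (T % n) j, u g := rfl
    have e3 : v i d (T / n + 1) = u d := rfl
    have e4 : v i a (T / n + 1) = u a := rfl
    rw [e1, e2, e3, e4]
    linarith

/-- For mixed items (arbitrary real-valued valuations) with at most five
agents/items, a swapEF repeated matching exists. -/
theorem stmt15 (n T : ℕ) (hn : n ≤ 5)
    (v : Fin n → Fin n → ℕ → ℝ) :
    ∃ A : Fin T → Fin n ≃ Fin n, swapEF v A := by
  rcases Nat.eq_zero_or_pos n with h0 | h0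
  · subst h0
    exact ⟨fun _ => Equiv.refl _, fun i => i.elim0⟩
  · haveI : NeZero n := ⟨h0.ne'⟩
    exact ⟨_, main_pos n T hn v⟩
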